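/- The total variation distance between the Pauli characteristic distributions of two pure states is bounded by their trace distance: for n-qubit pure states ψ and φ, TV(Ξ_ψ, Ξ_φ) ≤ (1/2)‖ψ^{⊗2} − φ^{⊗2}‖₁ ≤ ‖ψ − φ‖₁. -/

import Mathlib

open scoped BigOperators
open ComplexConjugate
open scoped ComplexOrder

noncomputable def traceNorm {ι : Type*} [Fintype ι] [DecidableEq ι] (A : Matrix ι ι ℂ) : ℝ :=
  (((Matrix.posSemidef_conjTranspose_mul_self A).1.eigenvectorUnitary.1 *
      Matrix.diagonal (((↑) : ℝ → ℂ) ∘ Real.sqrt ∘ (Matrix.posSemidef_conjTranspose_mul_self A).1.eigenvalues) *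
      (star (Matrix.posSemidef_conjTranspose_mul_self A).1.eigenvectorUnitary : Matrix ι ι ℂ)).trace).re

noncomputable def proj {ι : Type*} (v : ι → ℂ) : Matrix ι ι ℂ :=
  Matrix.of fun i j => v i * conj (v j)

noncomputable def tensorPow {ι : Type*} (A : Matrix ι ι ℂ) (t : ℕ) :
    Matrix (Fin t → ι) (Fin t → ι) ℂ :=
  Matrix.of fun x y => ∏ i, A (x i) (y i)

noncomputable def pauli {n : ℕ} (a b : Fin n → ZMod 2) :
    Matrix (Fin n → ZMod 2) (Fin n → ZMod 2) ℂ :=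
  Matrix.of fun x y =>
    if x = y + a then
      Complex.I ^ (∑ i, (a i * b i).val) * (-1 : ℂ) ^ (∑ i, (b i * y i).val)
    else 0

noncomputable def xi {n : ℕ} (ρ : Matrix (Fin n → ZMod 2) (Fin n → ZMod 2) ℂ)
    (p : (Fin n → ZMod 2) × (Fin n → ZMod 2)) : ℝ :=
  Complex.normSq ((pauli p.1 p.2 * ρ).trace) / 2 ^ n

/-- Total variation distance between the Pauli characteristic distributions. -/
noncomputable def tvXi {n : ℕ} (ρ σ : Matrix (Fin n → ZMod 2) (Fin n → ZMod 2) ℂ) : ℝ :=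
  (1 / 2) * ∑ p : (Fin n → ZMod 2) × (Fin n → ZMod 2), |xi ρ p - xi σ p|

/- ======================= auxiliary development ======================= -/

open Matrix
set_option linter.unusedSectionVars false

namespace TvAux

variable {ι : Type*} [Fintype ι] [DecidableEq ι]

noncomputable def outer (x y : ι → ℂ) : Matrix ι ι ℂ := Matrix.of fun i j => x i * conj (y j)
noncomputable def ip (x y : ι → ℂ) : ℂ := ∑ k, conj (x k) * y k

lemma proj_eq_outer (x : ι → ℂ) : proj x = outer x x := rfl

lemma outer_mul_outer (x y z w : ι → ℂ) : outer x y * outer z w = ip y z • outer x w := by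
  ext i j
  simp only [Matrix.mul_apply, outer, Matrix.of_apply, Matrix.smul_apply, ip, smul_eq_mul,
    Finset.sum_mul]
  exact Finset.sum_congr rfl fun k _ => by ring

lemma ip_conj (x y : ι → ℂ) : ip y x = conj (ip x y) := by
  simp only [ip, map_sum, _root_.map_mul, Complex.conj_conj]
  exact Finset.sum_congr rfl fun k _ => by ring

lemma trace_outer (x y : ι → ℂ) : (outer x y).trace = ip y x := by
  simp only [Matrix.trace, Matrix.diag, outer, Matrix.of_apply, ip]
  exact Finset.sum_congr rfl fun k _ => by ring

lemma ip_self_eq_one {x : ι → ℂ} (h : ∑ k, Complex.normSq (x k) = 1) : ip x x = 1 := by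
  unfold ip
  have : ∀ k, conj (x k) * x k = ((Complex.normSq (x k) : ℝ) : ℂ) := fun k => by
    rw [mul_comm, Complex.mul_conj]
  simp only [this]
  rw [← Complex.ofReal_sum, h, Complex.ofReal_one]

variable {u v : ι → ℂ}

lemma sqA (hu : ip u u = 1) (hv : ip v v = 1) :
    (proj u - proj v) * (proj u - proj v)
      = outer u u + outer v v - (ip u v • outer u v + ip v u • outer v u) := by
  simp only [proj_eq_outer, sub_mul, mul_sub, outer_mul_outer, hu, hv, one_smul]
  module

lemma sqA_mul_sqA (hu : ip u u = 1) (hv : ip v v = 1) :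
    ((proj u - proj v) * (proj u - proj v)) * ((proj u - proj v) * (proj u - proj v))
      = ((1:ℂ) - ip u v * ip v u) • ((proj u - proj v) * (proj u - proj v)) := by
  rw [sqA hu hv]
  simp only [sub_mul, mul_sub, add_mul, mul_add, smul_mul_assoc, mul_smul_comm,
    outer_mul_outer, hu, hv, one_smul, smul_smul]
  module

lemma trace_sqA (hu : ip u u = 1) (hv : ip v v = 1) :
    ((proj u - proj v) * (proj u - proj v)).trace = 2 - 2 * (ip u v * ip v u) := by
  rw [sqA hu hv]
  simp only [Matrix.trace_sub, Matrix.trace_add, Matrix.trace_smul, trace_outer, hu, hv,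
    smul_eq_mul]
  ring

lemma psd_real_smul {M : Matrix ι ι ℂ} (hM : M.PosSemidef) {r : ℝ} (hr : 0 ≤ r) :
    ((r:ℂ) • M).PosSemidef := by
  simpa only [Complex.coe_smul] using hM.smul hr

lemma trace_conjTranspose_mul_self (M : Matrix ι ι ℂ) :
    (Mᴴ * M).trace = ((∑ j, ∑ i, Complex.normSq (M i j) : ℝ) : ℂ) := by
  simp only [Matrix.trace, Matrix.diag, Matrix.mul_apply, Matrix.conjTranspose_apply]
  push_cast
  refine Finset.sum_congr rfl fun j _ => Finset.sum_congr rfl fun i _ => ?_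
  rw [mul_comm, show star (M i j) = conj (M i j) from rfl, Complex.mul_conj]

open scoped MatrixOrder in
lemma traceNorm_eq_of_sq {A B : Matrix ι ι ℂ} (hB : B.PosSemidef) (h : B * B = Aᴴ * A) :
    traceNorm A = B.trace.re := by
  have hH := (Matrix.posSemidef_conjTranspose_mul_self A)
  have e : traceNorm A = (cfc Real.sqrt (Aᴴ * A)).trace.re := by
    rw [hH.1.cfc_eq, Matrix.IsHermitian.cfc, Unitary.conjStarAlgAut_apply]; rfl
  rw [e, ← cfcₙ_eq_cfc, ← CFC.sqrt_eq_real_sqrt _ hH.nonneg, CFC.sqrt_unique h hB.nonneg]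

lemma traceNorm_zero : traceNorm (0 : Matrix ι ι ℂ) = 0 := by
  rw [traceNorm_eq_of_sq Matrix.PosSemidef.zero (by simp)]
  simp

lemma traceNorm_of_sq {A : Matrix ι ι ℂ} (hA : A.IsHermitian) (t : ℝ)
    (h4 : (A * A) * (A * A) = ((1 - t : ℝ) : ℂ) • (A * A))
    (htr : (A * A).trace = ((2 - 2 * t : ℝ) : ℂ)) :
    traceNorm A = 2 * Real.sqrt (1 - t) := by
  have hAA : Aᴴ * A = A * A := by rw [hA.eq]
  have hpsd : (A * A).PosSemidef := hAA ▸ Matrix.posSemidef_conjTranspose_mul_self A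
  have htle : t ≤ 1 := by
    have h1 : ((2 - 2 * t : ℝ) : ℂ) = ((∑ j, ∑ i, Complex.normSq (A i j) : ℝ) : ℂ) := by
      rw [← htr, ← hAA, trace_conjTranspose_mul_self]
    have h2 : (2 - 2*t : ℝ) = ∑ j, ∑ i, Complex.normSq (A i j) := by exact_mod_cast h1
    nlinarith [Finset.sum_nonneg (fun j (_ : j ∈ Finset.univ) =>
      Finset.sum_nonneg (fun i (_ : i ∈ Finset.univ) => Complex.normSq_nonneg (A i j)))]
  rcases eq_or_lt_of_le htle with heq | hlt
  · have h1 : ((2 - 2 * t : ℝ) : ℂ) = ((∑ j, ∑ i, Complex.normSq (A i j) : ℝ) : ℂ) := by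
      rw [← htr, ← hAA, trace_conjTranspose_mul_self]
    have h2 : (∑ j, ∑ i, Complex.normSq (A i j)) = 0 := by
      have := (Complex.ofReal_inj.mp h1).symm
      rw [this, heq]; ring
    have hA0 : A = 0 := by
      ext i j
      have hj := (Finset.sum_eq_zero_iff_of_nonneg (fun j _ => Finset.sum_nonneg
        (fun i _ => Complex.normSq_nonneg (A i j)))).mp h2 j (Finset.mem_univ j)
      have hi := (Finset.sum_eq_zero_iff_of_nonneg
        (fun i _ => Complex.normSq_nonneg (A i j))).mp hj i (Finset.mem_univ i)
      exact Complex.normSq_eq_zero.mp hi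
    rw [hA0, traceNorm_zero, ← heq]
    simp
  · set r : ℝ := Real.sqrt (1 - t) with hr
    have hrpos : 0 < r := Real.sqrt_pos.mpr (by linarith)
    have hr2 : r ^ 2 = 1 - t := Real.sq_sqrt (by linarith)
    set B : Matrix ι ι ℂ := ((r⁻¹ : ℝ) : ℂ) • (A * A) with hB
    have hBpsd : B.PosSemidef := psd_real_smul hpsd (by positivity)
    have hBsq : B ^ 2 = Aᴴ * A := by
      rw [hAA, hB, pow_two, Matrix.smul_mul, Matrix.mul_smul, smul_smul, h4, smul_smul]
      have hcoef : (((r⁻¹:ℝ):ℂ) * ((r⁻¹:ℝ):ℂ) * ((1 - t : ℝ):ℂ)) = (1:ℂ) := by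
        rw [← Complex.ofReal_mul, ← Complex.ofReal_mul, ← hr2]
        norm_cast
        field_simp
      rw [hcoef, one_smul]
    rw [traceNorm_eq_of_sq hBpsd (by rw [← hBsq, pow_two]), hB, Matrix.trace_smul, htr]
    rw [smul_eq_mul, ← Complex.ofReal_mul, Complex.ofReal_re]
    rw [show r⁻¹ * (2 - 2*t) = 2 * ((1-t) / r) by field_simp]
    rw [← hr2]
    rw [show r^2 / r = r by field_simp]

lemma isHermitian_proj (x : ι → ℂ) : (proj x).IsHermitian := by
  ext i j
  simp [proj, Matrix.conjTranspose_apply, mul_comm]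

lemma traceNorm_proj_sub (hu : ip u u = 1) (hv : ip v v = 1) :
    traceNorm (proj u - proj v) = 2 * Real.sqrt (1 - Complex.normSq (ip u v)) := by
  have hmc : ip u v * ip v u = ((Complex.normSq (ip u v) : ℝ) : ℂ) := by
    rw [ip_conj u v, Complex.mul_conj]
  apply traceNorm_of_sq ((isHermitian_proj u).sub (isHermitian_proj v))
  · rw [sqA_mul_sqA hu hv, hmc]
    norm_cast
  · rw [trace_sqA hu hv, hmc]
    push_cast
    ring

lemma normSq_ip_le_one (hu : ip u u = 1) (hv : ip v v = 1) :
    Complex.normSq (ip u v) ≤ 1 := by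
  have hmc : ip u v * ip v u = ((Complex.normSq (ip u v) : ℝ) : ℂ) := by
    rw [ip_conj u v, Complex.mul_conj]
  have hH : (proj u - proj v)ᴴ = proj u - proj v := ((isHermitian_proj u).sub (isHermitian_proj v)).eq
  have h1 : ((2 - 2 * Complex.normSq (ip u v) : ℝ) : ℂ)
      = ((∑ j, ∑ i, Complex.normSq ((proj u - proj v) i j) : ℝ) : ℂ) := by
    rw [← trace_conjTranspose_mul_self, hH, trace_sqA hu hv, hmc]
    push_cast
    ring
  have h2 : (2 - 2 * Complex.normSq (ip u v) : ℝ)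
      = ∑ j, ∑ i, Complex.normSq ((proj u - proj v) i j) := by exact_mod_cast h1
  nlinarith [Finset.sum_nonneg (fun j (_ : j ∈ Finset.univ) =>
    Finset.sum_nonneg (fun i (_ : i ∈ Finset.univ) =>
      Complex.normSq_nonneg ((proj u - proj v) i j)))]

lemma tensorPow_proj (u : ι → ℂ) :
    tensorPow (proj u) 2 = proj (fun x : Fin 2 → ι => ∏ i, u (x i)) := by
  ext x y
  simp only [tensorPow, proj, Matrix.of_apply, map_prod, ← Finset.prod_mul_distrib]

lemma ip_tensor (u v : ι → ℂ) :
    ip (fun x : Fin 2 → ι => ∏ i, u (x i)) (fun x : Fin 2 → ι => ∏ i, v (x i))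
      = (ip u v) ^ 2 := by
  unfold ip
  simp only [map_prod, ← Finset.prod_mul_distrib]
  rw [← Fintype.prod_sum (fun (_ : Fin 2) k => conj (u k) * v k)]
  rw [Finset.prod_const]
  simp

lemma sum_proj_mul_conj (u v : ι → ℂ) :
    ∑ q : ι × ι, (proj u) q.2 q.1 * conj ((proj v) q.2 q.1)
      = ((Complex.normSq (ip u v) : ℝ) : ℂ) := by
  rw [Fintype.sum_prod_type]
  have : ∀ x y : ι, (proj u) y x * conj ((proj v) y x)
      = (conj (u x) * v x) * (u y * conj (v y)) := by
    intro x y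
    simp only [proj, Matrix.of_apply, _root_.map_mul, Complex.conj_conj]
    ring
  simp_rw [this]
  rw [← Finset.sum_mul_sum]
  have h2 : ∑ y : ι, u y * conj (v y) = conj (ip u v) := by
    rw [ip, map_sum]
    exact Finset.sum_congr rfl fun k _ => by rw [_root_.map_mul, Complex.conj_conj]
  rw [h2, show (∑ x : ι, conj (u x) * v x) = ip u v from rfl, Complex.mul_conj]

/- ---------- Pauli completeness ---------- -/

variable {n : ℕ}

lemma zmod2_sum_sign (c d : ZMod 2) :
    ∑ β : ZMod 2, ((-1:ℂ)) ^ ((β * c).val + (β * d).val) = if c = d then 2 else 0 := by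
  rw [show (Finset.univ : Finset (ZMod 2)) = {0, 1} from by decide]
  rw [Finset.sum_insert (by decide), Finset.sum_singleton]
  have hall : ∀ e : ZMod 2, e = 0 ∨ e = 1 := by decide
  have hc := hall c
  have hd := hall d
  have e00 : ((0:ZMod 2)*(0:ZMod 2)).val = 0 := rfl
  have e01 : ((0:ZMod 2)*(1:ZMod 2)).val = 0 := rfl
  have e10 : ((1:ZMod 2)*(0:ZMod 2)).val = 0 := rfl
  have e11 : ((1:ZMod 2)*(1:ZMod 2)).val = 1 := rfl
  have ev1 : (1:ZMod 2).val = 1 := rfl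
  have ev0 : (0:ZMod 2).val = 0 := rfl
  rcases hc with rfl | rfl <;> rcases hd with rfl | rfl <;>
    norm_num [e00, e01, e10, e11, ev0, ev1]

lemma sign_sum (y w : Fin n → ZMod 2) :
    ∑ b : Fin n → ZMod 2,
        ((-1:ℂ) ^ (∑ i, (b i * y i).val)) * ((-1:ℂ) ^ (∑ i, (b i * w i).val))
      = if y = w then ((2:ℂ))^n else 0 := by
  have hterm : ∀ b : Fin n → ZMod 2,
      ((-1:ℂ) ^ (∑ i, (b i * y i).val)) * ((-1:ℂ) ^ (∑ i, (b i * w i).val))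
        = ∏ i, ((-1:ℂ)) ^ ((b i * y i).val + (b i * w i).val) := by
    intro b
    rw [← pow_add, ← Finset.sum_add_distrib, ← Finset.prod_pow_eq_pow_sum]
  simp_rw [hterm]
  rw [← Fintype.prod_sum (fun i (β : ZMod 2) => ((-1:ℂ)) ^ ((β * y i).val + (β * w i).val))]
  simp_rw [zmod2_sum_sign]
  by_cases h : y = w
  · subst h; simp
  · rw [if_neg h]
    obtain ⟨i, hi⟩ : ∃ i, y i ≠ w i := by
      by_contra hc
      push_neg at hc
      exact h (funext hc)
    exact Finset.prod_eq_zero (Finset.mem_univ i) (by rw [if_neg hi])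

lemma add_self_zero (y : Fin n → ZMod 2) : y + y = 0 := by
  funext i
  exact CharTwo.add_self_eq_zero _

lemma pauli_complete (x y z w : Fin n → ZMod 2) :
    ∑ p : (Fin n → ZMod 2) × (Fin n → ZMod 2),
        pauli p.1 p.2 x y * conj (pauli p.1 p.2 z w)
      = if x = z ∧ y = w then ((2:ℂ))^n else 0 := by
  have hterm : ∀ a b : Fin n → ZMod 2, pauli a b x y * conj (pauli a b z w)
      = if x = y + a ∧ z = w + a then
          ((-1:ℂ) ^ (∑ i, (b i * y i).val)) * ((-1:ℂ) ^ (∑ i, (b i * w i).val))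
        else 0 := by
    intro a b
    simp only [pauli, Matrix.of_apply]
    by_cases h1 : x = y + a <;> by_cases h2 : z = w + a <;>
      simp only [h1, h2, if_true, if_false, true_and, and_true, false_and, and_false,
        if_pos, map_zero, mul_zero, zero_mul, if_neg, not_false_iff]
    set m := ∑ i, (a i * b i).val
    have hIm : Complex.I ^ m * (-Complex.I) ^ m = 1 := by
      rw [← mul_pow]
      simp [Complex.I_mul_I]
    rw [_root_.map_mul, map_pow, map_pow, Complex.conj_I]
    rw [show conj (-1 : ℂ) = -1 by simp]
    calc Complex.I ^ m * (-1:ℂ) ^ (∑ i, (b i * y i).val) *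
          ((-Complex.I) ^ m * (-1:ℂ) ^ (∑ i, (b i * w i).val))
        = (Complex.I ^ m * (-Complex.I) ^ m) *
          ((-1:ℂ) ^ (∑ i, (b i * y i).val) * (-1:ℂ) ^ (∑ i, (b i * w i).val)) := by ring
      _ = _ := by rw [hIm, one_mul]
  rw [Fintype.sum_prod_type]
  simp_rw [hterm]
  have h2 : ∀ a : Fin n → ZMod 2,
      (∑ b : Fin n → ZMod 2, if x = y + a ∧ z = w + a then
          ((-1:ℂ) ^ (∑ i, (b i * y i).val)) * ((-1:ℂ) ^ (∑ i, (b i * w i).val)) else 0)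
      = if x = y + a ∧ z = w + a then (if y = w then ((2:ℂ))^n else 0) else 0 := by
    intro a
    by_cases h : x = y + a ∧ z = w + a
    · simp only [h, if_true]
      exact sign_sum y w
    · simp [h]
  simp_rw [h2]
  have hx : ∀ a : Fin n → ZMod 2, (x = y + a ∧ z = w + a) ↔ (a = x + y ∧ z = w + a) := by
    intro a
    constructor
    · rintro ⟨h1, h2⟩
      refine ⟨?_, h2⟩
      rw [h1, add_comm y a, add_assoc, add_self_zero, add_zero]
    · rintro ⟨h1, h2⟩
      refine ⟨?_, h2⟩
      subst h1
      rw [add_comm x y, ← add_assoc, add_self_zero, zero_add]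
  simp_rw [hx, ite_and]
  rw [Finset.sum_ite_eq' Finset.univ (x + y)
    (fun a => if z = w + a then (if y = w then ((2:ℂ))^n else 0) else 0)]
  simp only [Finset.mem_univ, if_true]
  by_cases hyw : y = w
  · have hwa : w + (x + y) = x := by
      rw [← hyw, add_comm x y, ← add_assoc, add_self_zero, zero_add]
    rw [hwa]
    by_cases hxz : x = z
    · simp [hxz, hyw, eq_comm]
    · have hzx : ¬ (z = x) := fun h => hxz h.symm
      simp [hzx, hxz]
  · simp [hyw]

lemma trace_pauli_mul (a b : Fin n → ZMod 2) (ρ : Matrix (Fin n → ZMod 2) (Fin n → ZMod 2) ℂ) :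
    (pauli a b * ρ).trace
      = ∑ q : (Fin n → ZMod 2) × (Fin n → ZMod 2), pauli a b q.1 q.2 * ρ q.2 q.1 := by
  rw [Fintype.sum_prod_type]
  simp [Matrix.trace, Matrix.diag, Matrix.mul_apply]

lemma sum_trace_mul (ρ σ : Matrix (Fin n → ZMod 2) (Fin n → ZMod 2) ℂ) :
    ∑ p : (Fin n → ZMod 2) × (Fin n → ZMod 2),
        (pauli p.1 p.2 * ρ).trace * conj ((pauli p.1 p.2 * σ).trace)
      = ((2:ℂ))^n * ∑ q : (Fin n → ZMod 2) × (Fin n → ZMod 2), ρ q.2 q.1 * conj (σ q.2 q.1) := by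
  have step1 : ∀ p : (Fin n → ZMod 2) × (Fin n → ZMod 2),
      (pauli p.1 p.2 * ρ).trace * conj ((pauli p.1 p.2 * σ).trace)
      = ∑ q : (Fin n → ZMod 2) × (Fin n → ZMod 2), ∑ r : (Fin n → ZMod 2) × (Fin n → ZMod 2),
          (pauli p.1 p.2 q.1 q.2 * conj (pauli p.1 p.2 r.1 r.2)) *
            (ρ q.2 q.1 * conj (σ r.2 r.1)) := by
    intro p
    rw [trace_pauli_mul, trace_pauli_mul, map_sum, Finset.sum_mul_sum]
    refine Finset.sum_congr rfl fun q _ => Finset.sum_congr rfl fun r _ => ?_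
    rw [_root_.map_mul]
    ring
  simp_rw [step1]
  rw [Finset.sum_comm]
  have step2 : ∀ q : (Fin n → ZMod 2) × (Fin n → ZMod 2),
      (∑ p : (Fin n → ZMod 2) × (Fin n → ZMod 2), ∑ r : (Fin n → ZMod 2) × (Fin n → ZMod 2),
          (pauli p.1 p.2 q.1 q.2 * conj (pauli p.1 p.2 r.1 r.2)) *
            (ρ q.2 q.1 * conj (σ r.2 r.1)))
      = ((2:ℂ))^n * (ρ q.2 q.1 * conj (σ q.2 q.1)) := by
    intro q
    rw [Finset.sum_comm]
    have inner : ∀ r : (Fin n → ZMod 2) × (Fin n → ZMod 2),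
        (∑ p : (Fin n → ZMod 2) × (Fin n → ZMod 2),
          (pauli p.1 p.2 q.1 q.2 * conj (pauli p.1 p.2 r.1 r.2)) *
            (ρ q.2 q.1 * conj (σ r.2 r.1)))
        = (if q.1 = r.1 ∧ q.2 = r.2 then ((2:ℂ))^n else 0) * (ρ q.2 q.1 * conj (σ r.2 r.1)) := by
      intro r
      rw [← Finset.sum_mul, pauli_complete]
    simp_rw [inner]
    have hcond : ∀ r : (Fin n → ZMod 2) × (Fin n → ZMod 2),
        (q.1 = r.1 ∧ q.2 = r.2) ↔ (r = q) := by
      intro r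
      rw [Prod.ext_iff]
      constructor
      · rintro ⟨h1, h2⟩; exact ⟨h1.symm, h2.symm⟩
      · rintro ⟨h1, h2⟩; exact ⟨h1.symm, h2.symm⟩
    simp_rw [hcond, ite_mul, zero_mul]
    rw [Finset.sum_ite_eq' Finset.univ q
      (fun r => ((2:ℂ))^n * (ρ q.2 q.1 * conj (σ r.2 r.1)))]
    simp
  simp_rw [step2]
  rw [← Finset.mul_sum]

end TvAux

/-- TV(Ξ_ψ, Ξ_φ) ≤ (1/2)‖ψ^{⊗2}−φ^{⊗2}‖₁ ≤ ‖ψ−φ‖₁ for pure states. -/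
theorem tvXi_le_traceNorm {n : ℕ} (u v : (Fin n → ZMod 2) → ℂ)
    (hu : ∑ x, Complex.normSq (u x) = 1) (hv : ∑ x, Complex.normSq (v x) = 1) :
    tvXi (proj u) (proj v) ≤ (1 / 2) * traceNorm (tensorPow (proj u) 2 - tensorPow (proj v) 2) ∧
    (1 / 2) * traceNorm (tensorPow (proj u) 2 - tensorPow (proj v) 2)
      ≤ traceNorm (proj u - proj v) := by
  classical
  have hu' : TvAux.ip u u = 1 := TvAux.ip_self_eq_one hu
  have hv' : TvAux.ip v v = 1 := TvAux.ip_self_eq_one hv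
  set t : ℝ := Complex.normSq (TvAux.ip u v) with ht
  have ht0 : 0 ≤ t := Complex.normSq_nonneg _
  have ht1 : t ≤ 1 := TvAux.normSq_ip_le_one hu' hv'
  -- tensor vectors
  set U : (Fin 2 → (Fin n → ZMod 2)) → ℂ := fun x => ∏ i, u (x i) with hUdef
  set V : (Fin 2 → (Fin n → ZMod 2)) → ℂ := fun x => ∏ i, v (x i) with hVdef
  have hUU : TvAux.ip U U = 1 := by
    rw [hUdef, TvAux.ip_tensor, hu', one_pow]
  have hVV : TvAux.ip V V = 1 := by
    rw [hVdef, TvAux.ip_tensor, hv', one_pow]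
  have hUV : Complex.normSq (TvAux.ip U V) = t ^ 2 := by
    rw [hUdef, hVdef, TvAux.ip_tensor, map_pow, ht]
  -- the two trace norms
  have hTmid : traceNorm (tensorPow (proj u) 2 - tensorPow (proj v) 2)
      = 2 * Real.sqrt (1 - t ^ 2) := by
    rw [TvAux.tensorPow_proj u, TvAux.tensorPow_proj v]
    rw [TvAux.traceNorm_proj_sub hUU hVV, hUV]
  have hTright : traceNorm (proj u - proj v) = 2 * Real.sqrt (1 - t) :=
    TvAux.traceNorm_proj_sub hu' hv'
  constructor
  · -- part 1
    rw [hTmid]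
    set d : ℝ := 2 ^ n with hd
    have hdpos : (0:ℝ) < d := by rw [hd]; positivity
    set au : (Fin n → ZMod 2) × (Fin n → ZMod 2) → ℝ :=
      fun p => ‖(pauli p.1 p.2 * proj u).trace‖ with hau
    set bv : (Fin n → ZMod 2) × (Fin n → ZMod 2) → ℝ :=
      fun p => ‖(pauli p.1 p.2 * proj v).trace‖ with hbv
    -- normalization sums
    have key : ∀ w₁ w₂ : (Fin n → ZMod 2) → ℂ,
        ∑ p : (Fin n → ZMod 2) × (Fin n → ZMod 2),
          (pauli p.1 p.2 * proj w₁).trace * conj ((pauli p.1 p.2 * proj w₂).trace)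
        = ((2:ℂ))^n * ((Complex.normSq (TvAux.ip w₁ w₂) : ℝ) : ℂ) := by
      intro w₁ w₂
      rw [TvAux.sum_trace_mul, TvAux.sum_proj_mul_conj]
    have hu2 : ∑ p : (Fin n → ZMod 2) × (Fin n → ZMod 2), au p ^ 2 = d := by
      have h := key u u
      rw [hu'] at h
      simp only [Complex.mul_conj] at h
      have h' : ((∑ p : (Fin n → ZMod 2) × (Fin n → ZMod 2),
          Complex.normSq ((pauli p.1 p.2 * proj u).trace) : ℝ) : ℂ) = (((2:ℝ)^n : ℝ) : ℂ) := by
        push_cast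
        simpa using h
      have h'' := Complex.ofReal_inj.mp h'
      rw [hd, ← h'']
      exact Finset.sum_congr rfl fun p _ => by rw [hau, Complex.sq_norm]
    have hv2 : ∑ p : (Fin n → ZMod 2) × (Fin n → ZMod 2), bv p ^ 2 = d := by
      have h := key v v
      rw [hv'] at h
      simp only [Complex.mul_conj] at h
      have h' : ((∑ p : (Fin n → ZMod 2) × (Fin n → ZMod 2),
          Complex.normSq ((pauli p.1 p.2 * proj v).trace) : ℝ) : ℂ) = (((2:ℝ)^n : ℝ) : ℂ) := by
        push_cast
        simpa using h
      have h'' := Complex.ofReal_inj.mp h'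
      rw [hd, ← h'']
      exact Finset.sum_congr rfl fun p _ => by rw [hbv, Complex.sq_norm]
    -- cross term lower bound
    set S : ℝ := ∑ p : (Fin n → ZMod 2) × (Fin n → ZMod 2), au p * bv p with hS
    have hScross : d * t ≤ S := by
      have h := key u v
      have habs : ‖(∑ p : (Fin n → ZMod 2) × (Fin n → ZMod 2),
          (pauli p.1 p.2 * proj u).trace * conj ((pauli p.1 p.2 * proj v).trace))‖ = d * t := by
        rw [h, norm_mul, norm_pow, Complex.norm_two, Complex.norm_real, Real.norm_eq_abs,
          abs_of_nonneg ht0, hd]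
      calc d * t = ‖(∑ p : (Fin n → ZMod 2) × (Fin n → ZMod 2),
            (pauli p.1 p.2 * proj u).trace * conj ((pauli p.1 p.2 * proj v).trace))‖ := habs.symm
        _ ≤ ∑ p : (Fin n → ZMod 2) × (Fin n → ZMod 2),
            ‖(pauli p.1 p.2 * proj u).trace * conj ((pauli p.1 p.2 * proj v).trace)‖ :=
          norm_sum_le _ _
        _ = S := by
          refine Finset.sum_congr rfl fun p _ => ?_
          rw [norm_mul, Complex.norm_conj]
    have hS0 : 0 ≤ S := le_trans (mul_nonneg hdpos.le ht0) hScross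
    -- Cauchy–Schwarz bound
    have e1 : ∑ p : (Fin n → ZMod 2) × (Fin n → ZMod 2), (au p - bv p) ^ 2 = 2*d - 2*S := by
      have : ∀ p : (Fin n → ZMod 2) × (Fin n → ZMod 2),
          (au p - bv p) ^ 2 = (au p ^ 2 + bv p ^ 2) - 2 * (au p * bv p) := fun p => by ring
      simp_rw [this]
      rw [Finset.sum_sub_distrib, Finset.sum_add_distrib, ← Finset.mul_sum, hu2, hv2, ← hS]
      ring
    have e2 : ∑ p : (Fin n → ZMod 2) × (Fin n → ZMod 2), (au p + bv p) ^ 2 = 2*d + 2*S := by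
      have : ∀ p : (Fin n → ZMod 2) × (Fin n → ZMod 2),
          (au p + bv p) ^ 2 = (au p ^ 2 + bv p ^ 2) + 2 * (au p * bv p) := fun p => by ring
      simp_rw [this]
      rw [Finset.sum_add_distrib, Finset.sum_add_distrib, ← Finset.mul_sum, hu2, hv2, ← hS]
      ring
    set L : ℝ := ∑ p : (Fin n → ZMod 2) × (Fin n → ZMod 2), |au p ^ 2 - bv p ^ 2| with hL
    have hL0 : 0 ≤ L := Finset.sum_nonneg fun p _ => abs_nonneg _
    have hau0 : ∀ p : (Fin n → ZMod 2) × (Fin n → ZMod 2), 0 ≤ au p := fun p => by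
      rw [hau]; exact norm_nonneg _
    have hbv0 : ∀ p : (Fin n → ZMod 2) × (Fin n → ZMod 2), 0 ≤ bv p := fun p => by
      rw [hbv]; exact norm_nonneg _
    have hLterm : ∀ p : (Fin n → ZMod 2) × (Fin n → ZMod 2),
        |au p ^ 2 - bv p ^ 2| = |au p - bv p| * (au p + bv p) := by
      intro p
      rw [show au p ^ 2 - bv p ^ 2 = (au p - bv p) * (au p + bv p) by ring, abs_mul,
        abs_of_nonneg (add_nonneg (hau0 p) (hbv0 p))]
    have hCS : L ^ 2 ≤ (2*d - 2*S) * (2*d + 2*S) := by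
      have := Finset.sum_mul_sq_le_sq_mul_sq Finset.univ
        (fun p => |au p - bv p|) (fun p => au p + bv p)
      simp_rw [sq_abs] at this
      rw [e1, e2] at this
      calc L ^ 2 = (∑ p : (Fin n → ZMod 2) × (Fin n → ZMod 2),
            |au p - bv p| * (au p + bv p)) ^ 2 := by rw [hL]; congr 1; exact Finset.sum_congr rfl fun p _ => hLterm p
        _ ≤ _ := this
    have hLle : L ≤ 2 * d * Real.sqrt (1 - t ^ 2) := by
      have hsq : L ^ 2 ≤ (2 * d * Real.sqrt (1 - t ^ 2)) ^ 2 := by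
        have hrs : Real.sqrt (1 - t ^ 2) ^ 2 = 1 - t ^ 2 := Real.sq_sqrt (by nlinarith)
        have hS2 : (d * t) ^ 2 ≤ S ^ 2 := pow_le_pow_left₀ (mul_nonneg hdpos.le ht0) hScross 2
        calc L ^ 2 ≤ (2*d - 2*S) * (2*d + 2*S) := hCS
          _ = 4 * (d^2 - S^2) := by ring
          _ ≤ 4 * (d^2 - (d*t)^2) := by nlinarith
          _ = (2 * d * Real.sqrt (1 - t ^ 2)) ^ 2 := by rw [mul_pow, mul_pow, hrs]; ring
      have h1 := Real.sqrt_le_sqrt hsq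
      rwa [Real.sqrt_sq hL0, Real.sqrt_sq
        (mul_nonneg (mul_nonneg (by norm_num) hdpos.le) (Real.sqrt_nonneg _))] at h1
    -- conclude
    have htv : tvXi (proj u) (proj v) = 1 / (2 * d) * L := by
      rw [tvXi, hL]
      rw [Finset.mul_sum, Finset.mul_sum]
      refine Finset.sum_congr rfl fun p _ => ?_
      rw [xi, xi, div_sub_div_same, abs_div, abs_of_pos (show (0:ℝ) < 2 ^ n from by positivity)]
      rw [hau, hbv, Complex.sq_norm, Complex.sq_norm, ← hd]
      field_simp
    rw [htv]
    calc 1 / (2 * d) * L ≤ 1 / (2 * d) * (2 * d * Real.sqrt (1 - t ^ 2)) := by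
          apply mul_le_mul_of_nonneg_left hLle
          positivity
      _ = Real.sqrt (1 - t ^ 2) := by field_simp
      _ ≤ 1 / 2 * (2 * Real.sqrt (1 - t ^ 2)) := le_of_eq (by ring)
  · -- part 2
    rw [hTmid, hTright]
    have h4 : (1 - t ^ 2) ≤ 4 * (1 - t) := by nlinarith
    calc (1/2 : ℝ) * (2 * Real.sqrt (1 - t ^ 2)) = Real.sqrt (1 - t ^ 2) := by ring
      _ ≤ Real.sqrt (4 * (1 - t)) := Real.sqrt_le_sqrt h4
      _ = 2 * Real.sqrt (1 - t) := by
          rw [show (4:ℝ) * (1 - t) = 2^2 * (1 - t) by norm_num, Real.sqrt_mul (by positivity),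
            Real.sqrt_sq (by norm_num)]
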